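/- Let A = kQ/J^d be a truncated quiver algebra (d ≥ 2) where Q is connected and has no sources or sinks. Then A admits a perfect path if and only if Q is a basic cycle (an oriented cycle quiver with n vertices and n arrows). -/

import Mathlib

universe u v w

/-- A presentation of the `k`-algebra `A` as a monomial algebra `kQ/I` on the quiver
with vertex type `V`: `ι` sends each path of `Q` to its canonical image in `A`
(with `ι (p.comp q) = ι q * ι p`, so that the paper's concatenation `pq`, defined when
`s(p) = t(q)`, corresponds to the product `ι p * ι q`), and `Z p` means `p ∈ I`. -/
structure MonomialPresentation (k : Type u) (A : Type v) (V : Type w)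
    [Field k] [Ring A] [Algebra k A] [Quiver.{w} V] [Fintype V] : Type (max u v w) where
  ι : ∀ {i j : V}, Quiver.Path i j → A
  Z : ∀ {i j : V}, Quiver.Path i j → Prop
  zero_iff : ∀ {i j : V} (p : Quiver.Path i j), ι p = 0 ↔ Z p
  mul_comp : ∀ {i j l : V} (p : Quiver.Path i j) (q : Quiver.Path j l),
    ι (p.comp q) = ι q * ι p
  orth : ∀ i j : V, i ≠ j →
    ι (Quiver.Path.nil : Quiver.Path i i) * ι (Quiver.Path.nil : Quiver.Path j j) = 0
  sum_one : (∑ i : V, ι (Quiver.Path.nil : Quiver.Path i i)) = 1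
  len_two : ∀ {i j : V} (p : Quiver.Path i j), Z p → 2 ≤ p.length
  admissible : ∃ d : ℕ, ∀ {i j : V} (p : Quiver.Path i j), d ≤ p.length → Z p
  z_mul : ∀ {i j l : V} (p : Quiver.Path i j) (q : Quiver.Path j l),
    Z p ∨ Z q → Z (p.comp q)
  indep : LinearIndependent k
    (fun x : {y : Σ i j : V, Quiver.Path i j // ¬ Z y.2.2} => ι x.1.2.2)
  span_top : Submodule.span k
    (Set.range (fun x : Σ i j : V, Quiver.Path i j => ι x.2.2)) = ⊤

/-- The type of paths of a quiver, bundled with their endpoints. -/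
abbrev PathIn (V : Type w) [Quiver.{w} V] : Type w := Σ i j : V, Quiver.Path i j

/-- The type of arrows of a quiver, bundled with their endpoints. -/
abbrev ArrowIn (V : Type w) [Quiver.{w} V] : Type w := Σ i j : V, (i ⟶ j)

/-- `x` is a sub-path of `y`. -/
def IsSubpathIn {V : Type w} [Quiver.{w} V] (x y : PathIn V) : Prop :=
  ∃ (r : Quiver.Path y.1 x.1) (s : Quiver.Path x.2.1 y.2.1),
    y.2.2 = (r.comp x.2.2).comp s

namespace MonomialPresentation

variable {k : Type u} {A : Type v} {V : Type w}
  [Field k] [Ring A] [Algebra k A] [Quiver.{w} V] [Fintype V]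
  (P : MonomialPresentation k A V)

/-- `L(p)`: the right-minimal paths `q` among the nonzero paths with
`s(q) = t(p)` and `qp = 0` in `A`. -/
def LSet {i j : V} (p : Quiver.Path i j) : Set (PathIn V) :=
  {q | ¬ P.Z q.2.2 ∧ q.1 = j ∧ P.ι q.2.2 * P.ι p = 0 ∧
    ¬ ∃ r u : PathIn V, ¬ P.Z r.2.2 ∧ r.1 = j ∧ P.ι r.2.2 * P.ι p = 0 ∧
      1 ≤ u.2.2.length ∧ P.ι q.2.2 = P.ι u.2.2 * P.ι r.2.2}

/-- `R(p)`: the left-minimal paths `q` among the nonzero paths with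
`t(q) = s(p)` and `pq = 0` in `A`. -/
def RSet {i j : V} (p : Quiver.Path i j) : Set (PathIn V) :=
  {q | ¬ P.Z q.2.2 ∧ q.2.1 = i ∧ P.ι p * P.ι q.2.2 = 0 ∧
    ¬ ∃ r u : PathIn V, ¬ P.Z r.2.2 ∧ r.2.1 = i ∧ P.ι p * P.ι r.2.2 = 0 ∧
      1 ≤ u.2.2.length ∧ P.ι q.2.2 = P.ι r.2.2 * P.ι u.2.2}

/-- A perfect pair `(p, q)` of nonzero nontrivial paths with `s(p) = t(q)`:
`pq = 0`, `R(p) = {q}` and `L(q) = {p}`. -/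
def PerfectPair {i j l : V} (p : Quiver.Path i j) (q : Quiver.Path l i) : Prop :=
  1 ≤ p.length ∧ 1 ≤ q.length ∧ ¬ P.Z p ∧ ¬ P.Z q ∧ P.Z (q.comp p) ∧
  (∀ (m : V) (q' : Quiver.Path m i), ¬ P.Z q' → P.Z (q'.comp p) →
    ∃ x : Quiver.Path m l, q' = x.comp q) ∧
  (∀ (m : V) (p' : Quiver.Path i m), ¬ P.Z p' → P.Z (q.comp p') →
    ∃ y : Quiver.Path j m, p' = p.comp y)

/-- The perfect pair relation on bundled paths. -/
def PerfectPairS (x y : PathIn V) : Prop :=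
  ∃ (i j l : V) (p : Quiver.Path i j) (q : Quiver.Path l i),
    x = ⟨i, j, p⟩ ∧ y = ⟨l, i, q⟩ ∧ P.PerfectPair p q

/-- A perfect path: a nonzero path `p` admitting a sequence
`p = p₁, p₂, …, pₙ, pₙ₊₁ = p` in which all consecutive pairs are perfect. -/
def IsPerfectPath (x : PathIn V) : Prop :=
  ∃ (n : ℕ) (c : Fin (n + 2) → PathIn V), c 0 = x ∧ c (Fin.last (n + 1)) = x ∧
    ∀ m : Fin (n + 1), P.PerfectPairS (c m.castSucc) (c m.succ)

/-- `x ∈ F`: `x` is a minimal path contained in the ideal `I`. -/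
def InF (x : PathIn V) : Prop :=
  P.Z x.2.2 ∧ ∀ y : PathIn V, IsSubpathIn y x → y ≠ x → ¬ P.Z y.2.2

/-- The algebra is quadratic monomial: all minimal relations have length two. -/
def Quadratic : Prop := ∀ x : PathIn V, P.InF x → x.2.2.length = 2

/-- The arrow relation of the relation quiver `R_A`: there is an arrow
`α → β` when `t(α) = s(β)` and `βα ∈ F`. -/
def RQ (x y : ArrowIn V) : Prop :=
  ∃ (i j l : V) (α : i ⟶ j) (β : j ⟶ l), x = ⟨i, j, α⟩ ∧ y = ⟨j, l, β⟩ ∧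
    P.InF ⟨i, l, (α.toPath).comp β.toPath⟩

/-- The two vertices of the relation quiver lie in the same connected component. -/
def Conn (x y : ArrowIn V) : Prop :=
  Relation.ReflTransGen (fun a b => P.RQ a b ∨ P.RQ b a) x y

/-- The connected component of `x` in the relation quiver is a basic cycle:
every vertex of the component has a unique successor and a unique predecessor. -/
def InPerfectComponent (x : ArrowIn V) : Prop :=
  ∀ y : ArrowIn V, P.Conn x y → (∃! z, P.RQ y z) ∧ (∃! z, P.RQ z y)

/-- The connected component of `x` in the relation quiver contains no oriented cycle. -/
def InAcyclicComponent (x : ArrowIn V) : Prop :=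
  ∀ y : ArrowIn V, P.Conn x y → ¬ Relation.TransGen P.RQ y y

end MonomialPresentation

/-- The quiver is a basic `n`-cycle. -/
def IsBasicCycleQuiver (V : Type w) [Quiver.{w} V] : Prop :=
  ∃ n : ℕ, 0 < n ∧ ∃ f : V ≃ ZMod n,
    (∀ i j : V, Nonempty (i ⟶ j) ↔ f j = f i + 1) ∧
    (∀ (i j : V) (a b : i ⟶ j), a = b)

/-- The underlying graph of the quiver is connected. -/
def QuiverConnected (V : Type w) [Quiver.{w} V] : Prop :=
  Nonempty V ∧ ∀ i j : V,
    Relation.ReflTransGen (fun a b => Nonempty (a ⟶ b) ∨ Nonempty (b ⟶ a)) i j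

/-- The quiver has no sources. -/
def NoSources (V : Type w) [Quiver.{w} V] : Prop := ∀ j : V, ∃ i : V, Nonempty (i ⟶ j)

/-- The quiver has no sinks. -/
def NoSinks (V : Type w) [Quiver.{w} V] : Prop := ∀ i : V, ∃ j : V, Nonempty (i ⟶ j)

namespace PPAux
open Quiver
variable {V : Type w} [Quiver.{w} V]

lemma exists_path_into (h : NoSources V) (L : ℕ) (j : V) :
    ∃ (i : V) (q : Quiver.Path i j), q.length = L := by
  induction L generalizing j with
  | zero => exact ⟨j, Path.nil, rfl⟩
  | succ L ih =>
    obtain ⟨i, ⟨e⟩⟩ := h j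
    obtain ⟨i', q, hq⟩ := ih i
    exact ⟨i', q.cons e, by simp [hq]⟩

lemma exists_path_out (h : NoSinks V) (L : ℕ) (i : V) :
    ∃ (j : V) (q : Quiver.Path i j), q.length = L := by
  induction L with
  | zero => exact ⟨i, Path.nil, rfl⟩
  | succ L ih =>
    obtain ⟨j, q, hq⟩ := ih
    obtain ⟨j', ⟨e⟩⟩ := h j
    exact ⟨j', q.cons e, by simp [hq]⟩

lemma path_split {a b : V} (p : Quiver.Path a b) (L : ℕ) (hL : L ≤ p.length) :
    ∃ (v : V) (x : Quiver.Path a v) (y : Quiver.Path v b), p = x.comp y ∧ y.length = L := by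
  induction p generalizing L with
  | nil =>
    rw [Path.length_nil] at hL
    exact ⟨a, Path.nil, Path.nil, rfl, (Nat.le_zero.mp hL).symm⟩
  | cons p e ih =>
    rcases Nat.eq_zero_or_pos L with h0 | h1
    · exact ⟨_, p.cons e, Path.nil, rfl, h0.symm⟩
    · rw [Path.length_cons] at hL
      obtain ⟨v, x, y, hxy, hy⟩ := ih (L - 1) (by omega)
      refine ⟨v, x, y.cons e, by rw [hxy]; rfl, ?_⟩
      rw [Path.length_cons, hy]; omega

lemma toPath_len {a b : V} (e : a ⟶ b) : e.toPath.length = 1 := rfl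

lemma head_arrow_eq : ∀ (n : ℕ) {vv j ww ww' : V} (e : vv ⟶ ww) (e' : vv ⟶ ww')
    (c : Quiver.Path ww j) (c' : Quiver.Path ww' j), c.length = n →
    e.toPath.comp c = e'.toPath.comp c' →
    (⟨ww, e⟩ : Σ x : V, vv ⟶ x) = ⟨ww', e'⟩ := by
  intro n
  induction n with
  | zero =>
    intro vv j ww ww' e e' c c' hc heq
    cases c with
    | nil =>
      have hlen := congrArg Quiver.Path.length heq
      simp only [Quiver.Path.length_comp, Quiver.Hom.toPath, Path.length_cons,
        Path.length_nil] at hlen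
      cases c' with
      | nil =>
        have h : (Path.nil.cons e : Path vv j) = Path.nil.cons e' := heq
        injection h with h1 h2 h3 h4
        exact congrArg _ h4
      | cons _ _ => simp [Path.length_cons] at hlen
    | cons _ _ => simp at hc
  | succ n ih =>
    intro vv j ww ww' e e' c c' hc heq
    cases c with
    | nil => simp at hc
    | cons c1 g =>
      cases c' with
      | nil =>
        have hlen := congrArg Quiver.Path.length heq
        simp only [Quiver.Path.length_comp, Quiver.Hom.toPath, Path.length_cons,
          Path.length_nil] at hlen
        omega
      | cons c1' g' =>
        have heq2 : ((e.toPath.comp c1).cons g) = ((e'.toPath.comp c1').cons g') := heq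
        injection heq2 with h1 h2 h3 h4
        subst h1
        exact ih e e' c1 c1' (by simpa using hc) (eq_of_heq h3)

lemma last_arrow_eq {l vv ww ww' : V} (a : Quiver.Path l ww) (a' : Quiver.Path l ww')
    (e : ww ⟶ vv) (e' : ww' ⟶ vv) (h : a.cons e = a'.cons e') :
    (⟨ww, e⟩ : Σ x : V, x ⟶ vv) = ⟨ww', e'⟩ := by
  injection h with h1 h2 h3 h4
  subst h1
  exact congrArg _ (eq_of_heq h4)

section WithP
variable {k : Type u} {A : Type v}
  [Field k] [Ring A] [Algebra k A] [Fintype V]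
  (P : MonomialPresentation k A V) {d : ℕ}

lemma pp_lengths (htr : ∀ {i j : V} (p : Quiver.Path i j), P.Z p ↔ d ≤ p.length)
    (hnsrc : NoSources V)
    {i j l : V} {p : Quiver.Path i j} {q : Quiver.Path l i}
    (h : P.PerfectPair p q) : p.length + q.length = d ∧ 1 ≤ p.length ∧ 1 ≤ q.length := by
  obtain ⟨hp1, hq1, hpz, hqz, hzc, hR, hL⟩ := h
  rw [htr] at hpz hqz
  rw [htr, Quiver.Path.length_comp] at hzc
  obtain ⟨m, q0, hq0⟩ := exists_path_into hnsrc (d - p.length) i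
  have hq0z : ¬ P.Z q0 := by rw [htr]; omega
  have hzc0 : P.Z (q0.comp p) := by rw [htr, Quiver.Path.length_comp]; omega
  obtain ⟨x, hx⟩ := hR m q0 hq0z hzc0
  have hxl := congrArg Quiver.Path.length hx
  rw [Quiver.Path.length_comp] at hxl
  exact ⟨by omega, hp1, hq1⟩

lemma pp_in_unique (htr : ∀ {i j : V} (p : Quiver.Path i j), P.Z p ↔ d ≤ p.length)
    (hnsrc : NoSources V)
    {i j l u vv : V} {p : Quiver.Path i j} {q : Quiver.Path l i}
    (h : P.PerfectPair p q)
    (a0 : Quiver.Path l u) (e : u ⟶ vv) (b : Quiver.Path vv i)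
    (hdec : q = (a0.cons e).comp b) :
    ∀ (w' : V) (β' : w' ⟶ vv), (⟨w', β'⟩ : Σ x : V, x ⟶ vv) = ⟨u, e⟩ := by
  intro w' β'
  have hlen := pp_lengths P htr hnsrc h
  obtain ⟨hp1, hq1, hpz, hqz, hzc, hR, hL⟩ := h
  rw [htr] at hpz hqz
  obtain ⟨m, cp, hc⟩ := exists_path_into hnsrc a0.length w'
  have hql : q.length = a0.length + 1 + b.length := by
    rw [hdec, Quiver.Path.length_comp, Quiver.Path.length_cons]
  have hq'l : ((cp.cons β').comp b).length = q.length := by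
    rw [Quiver.Path.length_comp, Quiver.Path.length_cons, hc, hql]
  have hq'z : ¬ P.Z ((cp.cons β').comp b) := by rw [htr, hq'l]; omega
  have hzc' : P.Z (((cp.cons β').comp b).comp p) := by
    rw [htr, Quiver.Path.length_comp, hq'l]; omega
  obtain ⟨x, hx⟩ := hR m ((cp.cons β').comp b) hq'z hzc'
  have hxl := congrArg Quiver.Path.length hx
  rw [hq'l] at hxl
  rw [Quiver.Path.length_comp] at hxl
  cases x with
  | nil =>
    rw [Quiver.Path.nil_comp, hdec] at hx
    exact last_arrow_eq _ _ _ _ (Quiver.Path.comp_injective_left b hx)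
  | cons _ _ => rw [Quiver.Path.length_cons] at hxl; omega

lemma pp_out_unique (htr : ∀ {i j : V} (p : Quiver.Path i j), P.Z p ↔ d ≤ p.length)
    (hnsrc : NoSources V) (hnsk : NoSinks V)
    {i j l vv ww : V} {p : Quiver.Path i j} {q : Quiver.Path l i}
    (h : P.PerfectPair p q)
    (a : Quiver.Path i vv) (e : vv ⟶ ww) (r : Quiver.Path ww j)
    (hdec : p = a.comp (e.toPath.comp r)) :
    ∀ (w' : V) (e' : vv ⟶ w'), (⟨w', e'⟩ : Σ x : V, vv ⟶ x) = ⟨ww, e⟩ := by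
  intro w' e'
  have hlen := pp_lengths P htr hnsrc h
  obtain ⟨hp1, hq1, hpz, hqz, hzc, hR, hL⟩ := h
  rw [htr] at hpz hqz
  obtain ⟨m, cp, hc⟩ := exists_path_out hnsk r.length w'
  have hpl : p.length = a.length + (1 + r.length) := by
    rw [hdec, Quiver.Path.length_comp, Quiver.Path.length_comp, toPath_len]
  have hp'l : (a.comp (e'.toPath.comp cp)).length = p.length := by
    rw [Quiver.Path.length_comp, Quiver.Path.length_comp, toPath_len, hc, hpl]
  have hp'z : ¬ P.Z (a.comp (e'.toPath.comp cp)) := by rw [htr, hp'l]; omega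
  have hzc' : P.Z (q.comp (a.comp (e'.toPath.comp cp))) := by
    rw [htr, Quiver.Path.length_comp, hp'l]; omega
  obtain ⟨y, hy⟩ := hL m (a.comp (e'.toPath.comp cp)) hp'z hzc'
  have hyl := congrArg Quiver.Path.length hy
  rw [hp'l] at hyl
  rw [Quiver.Path.length_comp] at hyl
  cases y with
  | nil =>
    rw [Quiver.Path.comp_nil, hdec] at hy
    exact head_arrow_eq r.length e' e cp r hc (Quiver.Path.comp_injective_right a hy)
  | cons _ _ => rw [Quiver.Path.length_cons] at hyl; omega

end WithP
end PPAux
namespace PPAux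
open Quiver
variable {V : Type w} [Quiver.{w} V]

section Cycle
variable {n : ℕ}

lemma coord (f : V ≃ ZMod n) (hf : ∀ i j : V, Nonempty (i ⟶ j) ↔ f j = f i + 1) : ∀ {i j : V} (q : Quiver.Path i j), f j = f i + (q.length : ZMod n) := by
  intro i j q
  induction q with
  | nil => simp
  | @cons b cc q e ih =>
    have he : f cc = f b + 1 := (hf b cc).mp ⟨e⟩
    rw [he, ih, Path.length_cons]
    push_cast
    ring

lemma uniqT (f : V ≃ ZMod n) (hf : ∀ i j : V, Nonempty (i ⟶ j) ↔ f j = f i + 1)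
    (hu : ∀ (i j : V) (a b : i ⟶ j), a = b) {i j : V} (q : Quiver.Path i j) :
    ∀ {i' : V} (q' : Quiver.Path i' j), q'.length = q.length →
    (⟨i, q⟩ : Σ x : V, Quiver.Path x j) = ⟨i', q'⟩ := by
  induction q with
  | nil =>
    intro i' q' h
    rw [Path.length_nil] at h
    obtain rfl := q'.eq_of_length_zero h
    obtain rfl := Quiver.Path.eq_nil_of_length_zero q' h
    rfl
  | @cons b cc q1 e ih =>
    intro i' q' h
    cases q' with
    | nil => simp at h
    | @cons b' _ q1' e' =>
      rw [Path.length_cons, Path.length_cons] at h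
      have hb : b' = b := by
        apply f.injective
        have h1 : f cc = f b + 1 := (hf b cc).mp ⟨e⟩
        have h2 : f cc = f b' + 1 := (hf b' cc).mp ⟨e'⟩
        have h3 := h1.symm.trans h2
        exact (add_right_cancel h3).symm
      subst hb
      obtain rfl := hu _ _ e e'
      have := ih q1' (by omega)
      obtain ⟨rfl, hh⟩ := Sigma.mk.inj_iff.mp this
      rw [eq_of_heq hh]

lemma uniqS (f : V ≃ ZMod n) (hf : ∀ i j : V, Nonempty (i ⟶ j) ↔ f j = f i + 1)
    (hu : ∀ (i j : V) (a b : i ⟶ j), a = b) {i j : V} (q : Quiver.Path i j) :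
    ∀ {j' : V} (q' : Quiver.Path i j'), q'.length = q.length →
    (⟨j, q⟩ : Σ x : V, Quiver.Path i x) = ⟨j', q'⟩ := by
  induction q with
  | nil =>
    intro j' q' h
    rw [Path.length_nil] at h
    obtain rfl := (q'.eq_of_length_zero h).symm
    obtain rfl := Quiver.Path.eq_nil_of_length_zero q' h
    rfl
  | @cons b cc q1 e ih =>
    intro j' q' h
    cases q' with
    | nil => simp at h
    | @cons b' _ q1' e' =>
      rw [Path.length_cons, Path.length_cons] at h
      have h0 := ih q1' (by omega)
      obtain ⟨hb, hh⟩ := Sigma.mk.inj_iff.mp h0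
      subst hb
      obtain rfl := eq_of_heq hh
      have hj : j' = cc := by
        apply f.injective
        rw [(hf _ j').mp ⟨e'⟩, (hf _ cc).mp ⟨e⟩]
      subst hj
      obtain rfl := hu _ _ e e'
      rfl

section WithP
variable {k : Type u} {A : Type v}
  [Field k] [Ring A] [Algebra k A] [Fintype V]
  (P : MonomialPresentation k A V) {d : ℕ}

lemma bpair (f : V ≃ ZMod n) (hf : ∀ i j : V, Nonempty (i ⟶ j) ↔ f j = f i + 1)
    (hu : ∀ (i j : V) (a b : i ⟶ j), a = b) (htr : ∀ {i j : V} (p : Quiver.Path i j), P.Z p ↔ d ≤ p.length)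
    {i j l : V} (p : Quiver.Path i j) (q : Quiver.Path l i)
    (hsum : p.length + q.length = d) (hp1 : 1 ≤ p.length) (hq1 : 1 ≤ q.length) :
    P.PerfectPair p q := by
  refine ⟨hp1, hq1, ?_, ?_, ?_, ?_, ?_⟩
  · rw [htr]; omega
  · rw [htr]; omega
  · rw [htr, Quiver.Path.length_comp]; omega
  · intro m q' hq'z hzc
    rw [htr] at hq'z
    rw [htr, Quiver.Path.length_comp] at hzc
    obtain ⟨v, x, y, hxy, hyl⟩ := path_split q' q.length (by omega)
    have huq := uniqT f hf hu q y hyl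
    obtain ⟨rfl, hh⟩ := Sigma.mk.inj_iff.mp huq
    exact ⟨x, by rw [hxy, ← eq_of_heq hh]⟩
  · intro m p' hp'z hzc
    rw [htr] at hp'z
    rw [htr, Quiver.Path.length_comp] at hzc
    obtain ⟨v, x, y, hxy, hyl⟩ := path_split p' (p'.length - p.length) (by omega)
    have hxl : x.length = p.length := by
      have := congrArg Quiver.Path.length hxy
      rw [Quiver.Path.length_comp] at this
      omega
    have huq := uniqS f hf hu p x hxl
    obtain ⟨rfl, hh⟩ := Sigma.mk.inj_iff.mp huq
    exact ⟨y, by rw [hxy, ← eq_of_heq hh]⟩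

lemma pairS' (f : V ≃ ZMod n) (hf : ∀ i j : V, Nonempty (i ⟶ j) ↔ f j = f i + 1)
    (hu : ∀ (i j : V) (a b : i ⟶ j), a = b) (htr : ∀ {i j : V} (p : Quiver.Path i j), P.Z p ↔ d ≤ p.length)
    (x y : PathIn V) (hv : y.2.1 = x.1)
    (hsum : x.2.2.length + y.2.2.length = d)
    (h1 : 1 ≤ x.2.2.length) (h2 : 1 ≤ y.2.2.length) :
    P.PerfectPairS x y := by
  obtain ⟨i, j, p⟩ := x
  obtain ⟨l, i', q⟩ := y
  dsimp at hv hsum h1 h2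
  subst hv
  exact ⟨i', j, l, p, q, rfl, rfl, bpair P f hf hu htr p q hsum h1 h2⟩

end WithP
end Cycle

section Iter
variable {α : Type*}

lemma iter_mod (σ : α → α) (a : α) (pp : ℕ) (hp : 1 ≤ pp) (hper : σ^[pp] a = a) :
    ∀ t, σ^[t] a = σ^[t % pp] a := by
  intro t
  induction t using Nat.strong_induction_on with
  | _ t ih =>
    rcases lt_or_ge t pp with h | h
    · rw [Nat.mod_eq_of_lt h]
    · rw [Nat.mod_eq_sub_mod h, ← ih (t - pp) (by omega)]
      conv_lhs => rw [show t = (t - pp) + pp by omega]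
      rw [Function.iterate_add_apply, hper]

lemma exists_period [Fintype α] (σ : α → α) (hinj : Function.Injective σ) (a : α) :
    ∃ pp, 1 ≤ pp ∧ σ^[pp] a = a := by
  have key : ∀ s t : ℕ, s < t → σ^[s] a = σ^[t] a → ∃ pp, 1 ≤ pp ∧ σ^[pp] a = a := by
    intro s t hlt hEq
    refine ⟨t - s, by omega, ?_⟩
    have h2 : σ^[s] (σ^[t - s] a) = σ^[s] a := by
      rw [← Function.iterate_add_apply, show s + (t - s) = t by omega, ← hEq]
    exact (hinj.iterate s) h2
  have hni : ¬ Function.Injective (fun t : Fin (Fintype.card α + 1) => σ^[t.1] a) := by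
    intro hI
    have := Fintype.card_le_of_injective _ hI
    simp at this
  rw [Function.not_injective_iff] at hni
  obtain ⟨s, t, hst, hne⟩ := hni
  have hne' : s.1 ≠ t.1 := fun h => hne (Fin.ext h)
  rcases lt_or_gt_of_ne hne' with h | h
  · exact key s.1 t.1 h hst
  · exact key t.1 s.1 h hst.symm

lemma cycle_equiv [Fintype α] (σ : α → α) (hinj : Function.Injective σ)
    (v0 : α) (horb : ∀ ww, ∃ t, σ^[t] v0 = ww) :
    ∃ (pp : ℕ), 0 < pp ∧ ∃ g : Fin pp → α, Function.Bijective g ∧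
      (∀ t : Fin pp, g t = σ^[t.1] v0) ∧ σ^[pp] v0 = v0 := by
  classical
  obtain ⟨N, hN1, hNper⟩ := exists_period σ hinj v0
  let pred : ℕ → Prop := fun m => 1 ≤ m ∧ σ^[m] v0 = v0
  have hpred : ∃ m, pred m := ⟨N, hN1, hNper⟩
  set pp := Nat.find hpred with hpp
  obtain ⟨hpp1, hppper⟩ := Nat.find_spec hpred
  refine ⟨pp, by omega, fun t => σ^[t.1] v0, ⟨?_, ?_⟩, fun _ => rfl, hppper⟩
  · intro s t hst
    by_contra hne
    have hne' : s.1 ≠ t.1 := fun h => hne (Fin.ext h)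
    have key : ∀ s' t' : ℕ, s' < t' → t' < pp → σ^[s'] v0 = σ^[t'] v0 → False := by
      intro s' t' hlt hlt2 hEq
      have h2 : σ^[s'] (σ^[t' - s'] v0) = σ^[s'] v0 := by
        rw [← Function.iterate_add_apply, show s' + (t' - s') = t' by omega, ← hEq]
      have h3 := (hinj.iterate s') h2
      exact Nat.find_min hpred (m := t' - s') (by omega) ⟨by omega, h3⟩
    rcases lt_or_gt_of_ne hne' with h | h
    · exact key s.1 t.1 h t.isLt hst
    · exact key t.1 s.1 h s.isLt hst.symm
  · intro ww
    obtain ⟨t, ht⟩ := horb ww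
    refine ⟨⟨t % pp, Nat.mod_lt _ (by omega)⟩, ?_⟩
    dsimp
    rw [← iter_mod σ v0 pp hpp1 hppper t, ht]

end Iter
end PPAux
open MonomialPresentation in
/-- Example 3.8: a truncated quiver algebra `A = kQ/J^d` on a connected quiver `Q`
with no sources or sinks admits a perfect path if and only if `Q` is a basic cycle. -/
theorem truncated_has_perfect_path_iff_basic_cycle (k : Type u) (A : Type v) (V : Type w)
    [Field k] [Ring A] [Algebra k A] [Quiver.{w} V] [Fintype V]
    (P : MonomialPresentation k A V) (d : ℕ) (hd : 2 ≤ d)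
    (htr : ∀ {i j : V} (p : Quiver.Path i j), P.Z p ↔ d ≤ p.length)
    (hconn : QuiverConnected V) (hnsrc : NoSources V) (hnsk : NoSinks V) :
    (∃ x : PathIn V, P.IsPerfectPath x) ↔ IsBasicCycleQuiver V := by
  constructor
  · rintro ⟨x, nL, c, h0, hlast, hstep⟩
    classical
    have hqpos : ∀ m : Fin (nL + 2), ∃ m' : Fin (nL + 1), c m'.succ = c m := by
      intro m
      by_cases hm : m = 0
      · refine ⟨Fin.last nL, ?_⟩
        rw [Fin.succ_last, hlast, hm, h0]
      · exact ⟨m.pred hm, by rw [Fin.succ_pred]⟩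
    have hppos : ∀ m : Fin (nL + 2), ∃ m' : Fin (nL + 1), c m'.castSucc = c m := by
      intro m
      by_cases hm : m = Fin.last (nL + 1)
      · exact ⟨0, by rw [Fin.castSucc_zero, h0, hm, hlast]⟩
      · exact ⟨m.castPred hm, by rw [Fin.castSucc_castPred]⟩
    set S : V → Prop := fun v => ∃ m : Fin (nL + 2),
      ∃ (a : Quiver.Path (c m).1 v) (b : Quiver.Path v (c m).2.1),
        (c m).2.2 = a.comp b with hSdef
    have hcoreIn : ∀ v, S v → ∃ (m : Fin (nL + 2)) (i j l : V) (p : Quiver.Path i j)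
        (q : Quiver.Path l i) (a : Quiver.Path l v) (b : Quiver.Path v i),
        P.PerfectPair p q ∧ c m = ⟨l, i, q⟩ ∧ q = a.comp b ∧ 1 ≤ a.length := by
      intro v hv
      obtain ⟨m, hdec⟩ := hv
      obtain ⟨m', hq'⟩ := hqpos m
      obtain ⟨i, j, l, p, q, hx1, hx2, hpq⟩ := hstep m'
      have hcm : c m = ⟨l, i, q⟩ := by rw [← hq', hx2]
      rw [hcm] at hdec
      obtain ⟨a, b, hab⟩ := hdec
      rcases Nat.eq_zero_or_pos a.length with h0a | h1a
      · cases a with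
        | cons _ _ => rw [Quiver.Path.length_cons] at h0a; omega
        | nil =>
          obtain ⟨m2, hc2⟩ := hppos m
          obtain ⟨i2, j2, l2, p2, q2, hy1, hy2, hpq2⟩ := hstep m2
          have hcm2 : c m = ⟨i2, j2, p2⟩ := by rw [← hc2, hy1]
          have hfst : i2 = l := congrArg Sigma.fst (hcm2.symm.trans hcm)
          subst hfst
          have h21 : 1 ≤ q2.length := hpq2.2.1
          cases q2 with
          | nil => rw [Quiver.Path.length_nil] at h21; omega
          | cons q20 e2 =>
            exact ⟨m2.succ, i2, j2, l2, p2, q20.cons e2, q20.cons e2, Quiver.Path.nil,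
              hpq2, hy2, rfl, by rw [Quiver.Path.length_cons]; omega⟩
      · exact ⟨m, i, j, l, p, q, a, b, hpq, hcm, hab, h1a⟩
    have hcoreOut : ∀ v, S v → ∃ (m : Fin (nL + 2)) (i j l : V) (p : Quiver.Path i j)
        (q : Quiver.Path l i) (a : Quiver.Path i v) (b : Quiver.Path v j),
        P.PerfectPair p q ∧ c m = ⟨i, j, p⟩ ∧ p = a.comp b ∧ 1 ≤ b.length := by
      intro v hv
      obtain ⟨m, hdec⟩ := hv
      obtain ⟨m2, hc2⟩ := hppos m
      obtain ⟨i, j, l, p, q, hx1, hx2, hpq⟩ := hstep m2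
      have hcm : c m = ⟨i, j, p⟩ := by rw [← hc2, hx1]
      rw [hcm] at hdec
      obtain ⟨a, b, hab⟩ := hdec
      rcases Nat.eq_zero_or_pos b.length with h0b | h1b
      · cases b with
        | cons _ _ => rw [Quiver.Path.length_cons] at h0b; omega
        | nil =>
          obtain ⟨m3, hc3⟩ := hqpos m
          obtain ⟨i3, j3, l3, p3, q3, hz1, hz2, hpq3⟩ := hstep m3
          have hcm3 : c m = ⟨l3, i3, q3⟩ := by rw [← hc3, hz2]
          have hsnd : i3 = j := congrArg (fun z : PathIn V => z.2.1) (hcm3.symm.trans hcm)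
          subst hsnd
          exact ⟨m3.castSucc, i3, j3, l3, p3, q3, Quiver.Path.nil, p3,
            hpq3, hz1, (Quiver.Path.nil_comp p3).symm, hpq3.1⟩
      · exact ⟨m, i, j, l, p, q, a, b, hpq, hcm, hab, h1b⟩
    have hSin : ∀ v, S v → ∃ (u : V) (e : u ⟶ v), S u ∧
        ∀ (w' : V) (β' : w' ⟶ v), (⟨w', β'⟩ : Σ x : V, x ⟶ v) = ⟨u, e⟩ := by
      intro v hv
      obtain ⟨m, i, j, l, p, q, a, b, hpq, hcm, hab, h1a⟩ := hcoreIn v hv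
      cases a with
      | nil => rw [Quiver.Path.length_nil] at h1a; omega
      | @cons u _ a0 e =>
        refine ⟨u, e, ⟨m, ?_⟩, PPAux.pp_in_unique P htr hnsrc hpq a0 e b hab⟩
        rw [hcm]
        refine ⟨a0, e.toPath.comp b, ?_⟩
        show q = a0.comp (e.toPath.comp b)
        rw [hab, ← Quiver.Path.comp_assoc]
        rfl
    have hSout : ∀ v, S v → ∃ (u : V) (e : v ⟶ u), S u ∧
        ∀ (w' : V) (e' : v ⟶ w'), (⟨w', e'⟩ : Σ x : V, v ⟶ x) = ⟨u, e⟩ := by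
      intro v hv
      obtain ⟨m, i, j, l, p, q, a, b, hpq, hcm, hab, h1b⟩ := hcoreOut v hv
      obtain ⟨u, e, r, hrl, hr⟩ := b.eq_toPath_comp_of_length_eq_succ
        (n := b.length - 1) (by omega)
      have hdec2 : p = a.comp (e.toPath.comp r) := by rw [hab, hr]
      refine ⟨u, e, ⟨m, ?_⟩, PPAux.pp_out_unique P htr hnsrc hnsk hpq a e r hdec2⟩
      rw [hcm]
      refine ⟨a.comp e.toPath, r, ?_⟩
      show p = (a.comp e.toPath).comp r
      rw [hdec2, Quiver.Path.comp_assoc]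
    have hbase : S ((c 0).2.1) :=
      ⟨0, (c 0).2.2, Quiver.Path.nil, (Quiver.Path.comp_nil _).symm⟩
    have hall : ∀ v, S v := by
      intro v
      have hcon := hconn.2 ((c 0).2.1) v
      induction hcon with
      | refl => exact hbase
      | @tail b2 c2 hrt hstep2 ih =>
        rcases hstep2 with h | h
        · obtain ⟨e⟩ := h
          obtain ⟨u, e0, hSu, huq⟩ := hSout b2 ih
          have hcu : c2 = u := congrArg Sigma.fst (huq c2 e)
          rwa [hcu]
        · obtain ⟨e⟩ := h
          obtain ⟨u, e0, hSu, huq⟩ := hSin b2 ih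
          have hcu : c2 = u := congrArg Sigma.fst (huq c2 e)
          rwa [hcu]
    have hOut : ∀ v : V, ∃ z : Σ x : V, v ⟶ x,
        ∀ (w' : V) (e' : v ⟶ w'), (⟨w', e'⟩ : Σ x : V, v ⟶ x) = z := by
      intro v
      obtain ⟨u, e0, _, hq⟩ := hSout v (hall v)
      exact ⟨⟨u, e0⟩, hq⟩
    have hIn : ∀ v : V, ∃ z : Σ x : V, x ⟶ v,
        ∀ (w' : V) (e' : w' ⟶ v), (⟨w', e'⟩ : Σ x : V, x ⟶ v) = z := by
      intro v
      obtain ⟨u, e0, _, hq⟩ := hSin v (hall v)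
      exact ⟨⟨u, e0⟩, hq⟩
    choose σz hσ using hOut
    choose πz hπ using hIn
    set σ : V → V := fun v => (σz v).1 with hσdef
    have hσinj : Function.Injective σ := by
      intro a b hab
      have e2 : b ⟶ σ a := by rw [hab]; exact (σz b).2
      have h1 := hπ (σ a) a (σz a).2
      have h2 := hπ (σ a) b e2
      exact congrArg Sigma.fst (h1.trans h2.symm)
    set v0 : V := (c 0).2.1 with hv0
    have horb : ∀ ww : V, ∃ t : ℕ, σ^[t] v0 = ww := by
      intro ww
      have hcon := hconn.2 v0 ww
      induction hcon with
      | refl => exact ⟨0, rfl⟩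
      | @tail b2 c2 hrt hstep2 ih =>
        obtain ⟨t, ht⟩ := ih
        rcases hstep2 with h | h
        · obtain ⟨e⟩ := h
          have hc2 : c2 = σ b2 := congrArg Sigma.fst (hσ b2 c2 e)
          exact ⟨t + 1, by rw [Function.iterate_succ_apply', ht, ← hc2]⟩
        · obtain ⟨e⟩ := h
          have hb2 : b2 = σ c2 := congrArg Sigma.fst (hσ c2 b2 e)
          obtain ⟨N, hN1, hNper⟩ := PPAux.exists_period σ hσinj c2
          refine ⟨t + (N - 1), ?_⟩
          rw [show N = N - 1 + 1 from by omega] at hNper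
          rw [Nat.add_comm, Function.iterate_add_apply, ht, hb2,
            ← Function.iterate_succ_apply]
          exact hNper
    obtain ⟨pp, hpp, g, hgbij, hgdef, hper⟩ := PPAux.cycle_equiv σ hσinj v0 horb
    haveI : NeZero pp := ⟨by omega⟩
    let gE : Fin pp ≃ V := Equiv.ofBijective g hgbij
    let zE : ZMod pp ≃ Fin pp :=
      ⟨fun z => ⟨z.val, ZMod.val_lt z⟩, fun t => (t.1 : ZMod pp),
        fun z => ZMod.natCast_rightInverse z,
        fun t => Fin.ext (ZMod.val_cast_of_lt t.isLt)⟩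
    refine ⟨pp, hpp, gE.symm.trans zE.symm, ?_, ?_⟩
    · have hfσ : ∀ v : V, (gE.symm.trans zE.symm) (σ v) = (gE.symm.trans zE.symm) v + 1 := by
        intro v
        set t : Fin pp := gE.symm v with ht
        have hv : σ^[t.1] v0 = v := by
          have h5 := gE.apply_symm_apply v
          rw [← ht] at h5
          rw [← hgdef t]
          exact h5
        have hstep1 : σ v = g ⟨(t.1 + 1) % pp, Nat.mod_lt _ hpp⟩ := by
          rw [hgdef]
          dsimp only
          rw [← PPAux.iter_mod σ v0 pp (by omega) hper (t.1 + 1),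
            Function.iterate_succ_apply', hv]
        have hsymm : gE.symm (σ v) = ⟨(t.1 + 1) % pp, Nat.mod_lt _ hpp⟩ := by
          rw [hstep1]
          exact gE.symm_apply_apply _
        show zE.symm (gE.symm (σ v)) = zE.symm (gE.symm v) + 1
        rw [hsymm, ← ht]
        show (((t.1 + 1) % pp : ℕ) : ZMod pp) = ((t.1 : ℕ) : ZMod pp) + 1
        rw [ZMod.natCast_mod]
        push_cast
        ring
      intro i j
      constructor
      · rintro ⟨e⟩
        have hj : j = σ i := congrArg Sigma.fst (hσ i j e)
        rw [hj]
        exact hfσ i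
      · intro hEq
        have hj : j = σ i := by
          apply (gE.symm.trans zE.symm).injective
          rw [hEq, hfσ]
        exact ⟨by rw [hj]; exact (σz i).2⟩
    · intro i j a b
      have h3 := (hσ i j a).trans (hσ i j b).symm
      obtain ⟨-, h2⟩ := Sigma.mk.inj_iff.mp h3
      exact eq_of_heq h2
  · rintro ⟨n, hn, f, hf, hu⟩
    classical
    obtain ⟨j0⟩ := hconn.1
    choose src pth hlen using fun (L : ℕ) (j : V) => PPAux.exists_path_into hnsrc L j
    set ℓ : ℕ → ℕ := fun t => if t % 2 = 0 then 1 else d - 1 with hℓdef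
    have hℓ1 : ∀ t, 1 ≤ ℓ t := by
      intro t
      rw [hℓdef]
      dsimp only
      split <;> omega
    have hℓd : ∀ t, ℓ t + ℓ (t + 1) = d := by
      intro t
      rcases Nat.even_or_odd t with he | ho
      · have h1 : t % 2 = 0 := Nat.even_iff.mp he
        have h2 : ¬(t + 1) % 2 = 0 := by omega
        rw [hℓdef]
        dsimp only
        rw [if_pos h1, if_neg h2]
        omega
      · have h0 := Nat.odd_iff.mp ho
        have h1 : ¬t % 2 = 0 := by omega
        have h2 : (t + 1) % 2 = 0 := by omega
        rw [hℓdef]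
        dsimp only
        rw [if_neg h1, if_pos h2]
        omega
    set Ssum : ℕ → ℕ := fun t => ∑ s ∈ Finset.range t, ℓ s with hSsumdef
    have hSsucc : ∀ t, Ssum (t + 1) = Ssum t + ℓ t := fun t => Finset.sum_range_succ ℓ t
    have hS2 : ∀ kk, Ssum (2 * kk) = kk * d := by
      intro kk
      induction kk with
      | zero => rw [hSsumdef]; simp
      | succ k2 ih =>
        have h1 : 2 * (k2 + 1) = 2 * k2 + 1 + 1 := by omega
        rw [h1, hSsucc, hSsucc, ih, Nat.add_assoc, hℓd (2 * k2), Nat.succ_mul]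
    set vert : ℕ → V := fun t => f.symm (f j0 - (Ssum t : ZMod n)) with hvertdef
    have hvertf : ∀ t, f (vert t) = f j0 - (Ssum t : ZMod n) := by
      intro t
      rw [hvertdef]
      exact f.apply_symm_apply _
    have hsrcf : ∀ (L : ℕ) (j : V), f (src L j) = f j - (L : ZMod n) := by
      intro L j
      have h1 := PPAux.coord f hf (pth L j)
      rw [hlen] at h1
      rw [h1]
      ring
    have hlink : ∀ t, vert (t + 1) = src (ℓ t) (vert t) := by
      intro t
      apply f.injective
      rw [hsrcf, hvertf, hvertf, hSsucc]
      push_cast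
      ring
    have hCpair : ∀ t : ℕ, P.PerfectPairS
        (⟨src (ℓ t) (vert t), vert t, pth (ℓ t) (vert t)⟩ : PathIn V)
        (⟨src (ℓ (t + 1)) (vert (t + 1)), vert (t + 1), pth (ℓ (t + 1)) (vert (t + 1))⟩ :
          PathIn V) := by
      intro t
      apply PPAux.pairS' P f hf hu htr
      · exact hlink t
      · show (pth (ℓ t) (vert t)).length + (pth (ℓ (t + 1)) (vert (t + 1))).length = d
        rw [hlen, hlen]
        exact hℓd t
      · show 1 ≤ (pth (ℓ t) (vert t)).length
        rw [hlen]
        exact hℓ1 t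
      · show 1 ≤ (pth (ℓ (t + 1)) (vert (t + 1))).length
        rw [hlen]
        exact hℓ1 (t + 1)
    have hCeq : ∀ t s : ℕ, ℓ t = ℓ s → vert t = vert s →
        (⟨src (ℓ t) (vert t), vert t, pth (ℓ t) (vert t)⟩ : PathIn V) =
          ⟨src (ℓ s) (vert s), vert s, pth (ℓ s) (vert s)⟩ := by
      intro t s h1 h2
      rw [h1, h2]
    refine ⟨⟨src (ℓ 0) (vert 0), vert 0, pth (ℓ 0) (vert 0)⟩, 2 * n - 1,
      fun m => ⟨src (ℓ m.1) (vert m.1), vert m.1, pth (ℓ m.1) (vert m.1)⟩, rfl, ?_, ?_⟩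
    · have hval : (Fin.last (2 * n - 1 + 1)).1 = 2 * n := by
        rw [Fin.val_last]
        omega
      show (⟨src (ℓ (Fin.last (2 * n - 1 + 1)).1) (vert (Fin.last (2 * n - 1 + 1)).1),
          vert (Fin.last (2 * n - 1 + 1)).1,
          pth (ℓ (Fin.last (2 * n - 1 + 1)).1) (vert (Fin.last (2 * n - 1 + 1)).1)⟩ :
          PathIn V) = ⟨src (ℓ 0) (vert 0), vert 0, pth (ℓ 0) (vert 0)⟩
      rw [hval]
      apply hCeq
      · have e1 : (2 * n) % 2 = 0 := by omega
        have e2 : (0 : ℕ) % 2 = 0 := by omega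
        rw [hℓdef]
        dsimp only
        rw [if_pos e1, if_pos e2]
      · apply f.injective
        have h00 : Ssum 0 = 0 := by rw [hSsumdef]; simp
        rw [hvertf, hvertf, hS2 n, h00]
        push_cast [ZMod.natCast_self]
        ring
    · intro m
      have hp := hCpair m.1
      show P.PerfectPairS
        (⟨src (ℓ (m.castSucc).1) (vert (m.castSucc).1), vert (m.castSucc).1,
          pth (ℓ (m.castSucc).1) (vert (m.castSucc).1)⟩ : PathIn V)
        (⟨src (ℓ (m.succ).1) (vert (m.succ).1), vert (m.succ).1,
          pth (ℓ (m.succ).1) (vert (m.succ).1)⟩ : PathIn V)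
      simp only [Fin.coe_castSucc, Fin.val_succ]
      exact hp
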